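/- Let N ≥ 3 and let B₀, B₂, …, B_{2(N−1)} be N unit vectors in ℝ² summing to zero, listed in counterclockwise cyclic order. Fix j with 2 ≤ j and j − 1 < N/2, and suppose the counterclockwise angle θ_j from B₀ to B_{2j} satisfies θ_j ≥ π + 2(j−1)π/N. Rotate so that B₀ and B_{2j} have the same y-coordinate with B₀ to the right. Then the common y-coordinate of B₀ and B_{2j} is at most −sin(π(j−1)/N), and the sum of all N y-coordinates is strictly negative — contradicting the balance condition. Hence θ_j < π + 2(j−1)π/N. -/

import Mathlib

open Real

set_option maxHeartbeats 1000000 in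
/-- For a balanced `N`-sunburst `B k = (cos (θ k), sin (θ k))`, normalized so that
`θ 0 = 0` and the angles increase within one turn, the counterclockwise angle
`θ j` from `B 0` to `B j` satisfies `θ j < π + 2 (j-1) π / N` whenever
`2 ≤ j` and `j - 1 < N/2`. -/
theorem balanced_angle_bound (N j : ℕ) (hN : 3 ≤ N) (hj : 2 ≤ j)
    (hjN : (j : ℝ) - 1 < (N : ℝ) / 2) (hjltN : j < N)
    (θ : Fin N → ℝ)
    (hθ0 : θ ⟨0, by omega⟩ = 0)
    (hmono : StrictMono θ)
    (hrange : ∀ i, θ i ∈ Set.Ico (0 : ℝ) (2 * π))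
    (hcos : ∑ i, Real.cos (θ i) = 0)
    (hsin : ∑ i, Real.sin (θ i) = 0) :
    θ ⟨j, hjltN⟩ < π + 2 * ((j : ℝ) - 1) * π / (N : ℝ) := by
  by_contra hcon
  push_neg at hcon
  have hpi := Real.pi_pos
  set m : ℝ := (j : ℝ) - 1 with hm
  have hm1 : (1 : ℝ) ≤ m := by
    have : (2 : ℝ) ≤ (j : ℝ) := by exact_mod_cast hj
    linarith
  have hNpos : (0 : ℝ) < N := by positivity
  set T := θ ⟨j, hjltN⟩ with hT
  have hT2 : T < 2 * π := (hrange _).2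
  have hTge : π + 2 * m * π / N ≤ T := hcon
  have hmNpi : m * π / N < π / 2 := by
    rw [div_lt_iff₀ hNpos]
    nlinarith [mul_lt_mul_of_pos_left hjN hpi]
  set α := (π - T) / 2 with hα
  have hα1 : -(π / 2) < α := by
    rw [hα]; linarith
  have hα2 : α ≤ -(m * π / N) := by
    rw [hα]
    have : 2 * m * π / N = 2 * (m * π / N) := by ring
    linarith [hTge, this ▸ hTge]
  have hαneg : α < 0 := by
    have : (0:ℝ) < m * π / N := by positivity
    linarith
  -- common y-coordinate bound
  have hsinα : Real.sin α ≤ -Real.sin (m * π / N) := by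
    have h1 : Real.sin α = Real.cos (T / 2) := by
      rw [show α = π / 2 - T / 2 by rw [hα]; ring, Real.sin_pi_div_two_sub]
    rw [h1]
    have h2 : Real.cos (T / 2) ≤ Real.cos (m * π / N + π / 2) := by
      apply Real.cos_le_cos_of_nonneg_of_le_pi
      · positivity
      · linarith
      · have : 2 * m * π / N = 2 * (m * π / N) := by ring
        rw [this] at hTge; linarith
    rwa [Real.cos_add_pi_div_two] at h2
  -- Jordan's inequality
  have hjordan : 2 * m / N ≤ Real.sin (m * π / N) := by
    have h0 : (0:ℝ) ≤ m * π / N := by positivity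
    have h := Real.mul_le_sin h0 (le_of_lt hmNpi)
    have heq : 2 / π * (m * π / N) = 2 * m / N := by
      field_simp
    linarith [heq ▸ h]
  have hsinα2 : Real.sin α ≤ -(2 * m / N) := by linarith
  -- the rotated y-coordinates sum to zero
  have hsum0 : ∑ i, Real.sin (θ i + α) = 0 := by
    simp only [Real.sin_add]
    rw [Finset.sum_add_distrib, ← Finset.sum_mul, ← Finset.sum_mul, hsin, hcos]
    ring
  -- pointwise bound
  have hbound : ∀ i : Fin N,
      Real.sin (θ i + α) ≤ if 1 ≤ i.val ∧ i.val < j then 1 else Real.sin α := by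
    intro i
    by_cases hi : 1 ≤ i.val ∧ i.val < j
    · simp only [hi, and_self, if_true]
      exact Real.sin_le_one _
    · simp only [hi, if_false]
      rcases Nat.lt_or_ge i.val 1 with h0 | h1
      · have hi0 : i = ⟨0, by omega⟩ := Fin.ext (by show i.val = 0; omega)
        rw [hi0, hθ0, zero_add]
      · have hij : j ≤ i.val := by
          rcases Nat.lt_or_ge i.val j with h | h
          · exact absurd ⟨h1, h⟩ hi
          · exact h
        have hθi : T ≤ θ i := by
          rcases eq_or_lt_of_le hij with h | h
          · have : i = ⟨j, hjltN⟩ := Fin.ext h.symm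
            rw [this]
          · exact le_of_lt (hmono (show (⟨j, hjltN⟩ : Fin N) < i from h))
        have hθi2 : θ i < 2 * π := (hrange i).2
        have hTα : T = π - 2 * α := by rw [hα]; ring
        have key : Real.sin (θ i + α) = -Real.cos ((θ i + α) + π / 2) := by
          rw [Real.cos_add_pi_div_two, neg_neg]
        rw [key]
        have hcv : Real.cos ((θ i + α) + π / 2)
            = Real.cos ((θ i + α) + π / 2 - 2 * π) := by
          rw [Real.cos_sub_two_pi]
        rw [hcv]
        have hvabs : |(θ i + α) + π / 2 - 2 * π| ≤ α + π / 2 := by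
          rw [abs_le]
          constructor
          · linarith
          · linarith
        have hcosv : Real.cos (α + π / 2) ≤ Real.cos ((θ i + α) + π / 2 - 2 * π) := by
          rw [← Real.cos_abs ((θ i + α) + π / 2 - 2 * π)]
          exact Real.cos_le_cos_of_nonneg_of_le_pi (abs_nonneg _) (by linarith) hvabs
        rw [Real.cos_add_pi_div_two] at hcosv
        linarith
  -- sum the bounds
  have hcard : (Finset.univ.filter (fun i : Fin N => 1 ≤ i.val ∧ i.val < j)).card
      = j - 1 := by
    have hset : Finset.univ.filter (fun i : Fin N => 1 ≤ i.val ∧ i.val < j)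
        = Finset.Ioo (⟨0, by omega⟩ : Fin N) ⟨j, hjltN⟩ := by
      ext i
      simp [Fin.lt_def]
      omega
    rw [hset, Fin.card_Ioo]
    simp
  have hsumle : (0:ℝ) ≤ m * 1 + ((N : ℝ) - m) * Real.sin α := by
    have h1 : ∑ i, Real.sin (θ i + α)
        ≤ ∑ i : Fin N, (if 1 ≤ i.val ∧ i.val < j then (1:ℝ) else Real.sin α) :=
      Finset.sum_le_sum fun i _ => hbound i
    rw [hsum0] at h1
    rw [Finset.sum_ite, Finset.sum_const, Finset.sum_const] at h1
    rw [Finset.filter_not, Finset.card_sdiff_of_subset (Finset.filter_subset _ _)] at h1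
    simp only [Finset.card_univ, Fintype.card_fin, hcard, nsmul_eq_mul] at h1
    have hc1 : ((j - 1 : ℕ) : ℝ) = m := by
      rw [hm]; push_cast [Nat.cast_sub (by omega : 1 ≤ j)]; ring
    have hc2 : ((N - (j - 1) : ℕ) : ℝ) = (N : ℝ) - m := by
      rw [hm]; push_cast [Nat.cast_sub (by omega : j - 1 ≤ N),
        Nat.cast_sub (by omega : 1 ≤ j)]; ring
    rw [hc1, hc2] at h1
    linarith
  -- final contradiction
  have hNm : (0:ℝ) < (N : ℝ) - m := by linarith
  have h2 : ((N : ℝ) - m) * Real.sin α ≤ ((N : ℝ) - m) * (-(2 * m / N)) := by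
    exact mul_le_mul_of_nonneg_left hsinα2 (le_of_lt hNm)
  have h2' : ((N : ℝ) - m) * -(2 * m / N) = -(((N : ℝ) - m) * (2 * m / N)) := by ring
  have h3 : (0:ℝ) ≤ m - ((N : ℝ) - m) * (2 * m / N) := by
    rw [h2'] at h2; nlinarith [hsumle, h2]
  have heq : ((N : ℝ) - m) * (2 * m / N) = (((N : ℝ) - m) * (2 * m)) / N := by ring
  rw [heq] at h3
  have h3' : (((N : ℝ) - m) * (2 * m)) / N ≤ m := by linarith
  rw [div_le_iff₀ hNpos] at h3'
  have h6 : 2 * m * m < (N : ℝ) * m :=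
    mul_lt_mul_of_pos_right (by linarith : 2 * m < (N : ℝ)) (by linarith : (0:ℝ) < m)
  nlinarith [h3', h6]
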